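/- For any strategy profile X, any player i, and any alternative strategy x'_i for player i (with X' the profile obtained by replacing x_i with x'_i and leaving all other players unchanged), the total change in the weighted conformity terms equals the change in player i's own conformity term: ∑_{j=1}^N ((N−1)/N)·( ‖x_j − x̄‖² − ‖x'_j − x̄'‖² ) = ‖x_i − x̄‖² − ‖x'_i − x̄'‖², where x̄' denotes the mean of X' and x'_j = x_j for j ≠ i. -/
import Mathlib


open Finset



lemma scalar_key {N : ℕ} (hN : 2 ≤ N) (a : Fin N → ℝ) (i : Fin N) (b : ℝ) :
    ∑ j, ((N : ℝ) - 1) / N *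
        ((a j - (∑ l, a l) / N) ^ 2
          - (Function.update a i b j - (∑ l, Function.update a i b l) / N) ^ 2)
    = (a i - (∑ l, a l) / N) ^ 2 - (b - (∑ l, Function.update a i b l) / N) ^ 2 := by
  have hn : (N : ℝ) ≠ 0 := by
    have : 0 < N := by omega
    exact_mod_cast this.ne'
  set S := ∑ l, a l with hS
  have hS' : ∑ l, Function.update a i b l = S - a i + b := by
    rw [Finset.sum_update_of_mem (Finset.mem_univ i),
      Finset.sum_sdiff_eq_sub (Finset.singleton_subset_iff.mpr (Finset.mem_univ i))]
    simp; ring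
  have hsq : ∑ l, (Function.update a i b l) ^ 2
      = (∑ l, (a l) ^ 2) - (a i) ^ 2 + b ^ 2 := by
    have h : ∀ l, (Function.update a i b l) ^ 2
        = Function.update (fun l => (a l) ^ 2) i (b ^ 2) l := by
      intro l
      exact (Function.apply_update (fun _ v => v ^ 2) a i b l)
    simp only [h]
    rw [Finset.sum_update_of_mem (Finset.mem_univ i),
      Finset.sum_sdiff_eq_sub (Finset.singleton_subset_iff.mpr (Finset.mem_univ i))]
    simp; ring
  rw [hS']
  set S' : ℝ := S - a i + b with hS'def
  have key : ∑ j, ((N : ℝ) - 1) / N *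
        ((a j - S / N) ^ 2 - (Function.update a i b j - S' / N) ^ 2)
      = ((N : ℝ) - 1) / N * ((∑ l, (a l) ^ 2) - (∑ l, (Function.update a i b l) ^ 2)
          - 2 * (S / N) * S + 2 * (S' / N) * S' + N * ((S / N) ^ 2 - (S' / N) ^ 2)) := by
    rw [← Finset.mul_sum]
    congr 1
    have h : ∀ j, (a j - S / N) ^ 2 - (Function.update a i b j - S' / N) ^ 2
        = ((a j) ^ 2 - (Function.update a i b j) ^ 2)
          + (-(2 * (S / N)) * a j + (2 * (S' / N)) * Function.update a i b j)
          + ((S / N) ^ 2 - (S' / N) ^ 2) := by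
      intro j; ring
    simp only [h]
    rw [Finset.sum_add_distrib, Finset.sum_add_distrib, Finset.sum_sub_distrib,
      Finset.sum_add_distrib, ← Finset.mul_sum, ← Finset.mul_sum, ← hS, hS',
      Finset.sum_const, Finset.card_univ, Fintype.card_fin, nsmul_eq_mul]
    ring
  rw [key, hsq, hS'def]
  field_simp
  ring


/-- Squared Euclidean norm of a real vector. -/
noncomputable def sqnorm {d : ℕ} (v : Fin d → ℝ) : ℝ := ∑ k, (v k) ^ 2

/-- Population mean of the strategy profile `X`, computed coordinatewise in ℝ. -/
noncomputable def mean {N d : ℕ} (X : Fin N → Fin d → ℤ) : Fin d → ℝ :=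
  fun k => (∑ j, (X j k : ℝ)) / N

/-- Under a unilateral deviation of player `i`, the total change in the weighted
conformity terms equals the change in player `i`'s own conformity term:
`∑_j ((N-1)/N)(‖x_j - x̄‖² - ‖x'_j - x̄'‖²) = ‖x_i - x̄‖² - ‖x'_i - x̄'‖²`. -/
theorem total_conformity_change {N d : ℕ} (hN : 2 ≤ N)
    (X : Fin N → Fin d → ℤ) (i : Fin N) (x' : Fin d → ℤ) :
    ∑ j, ((N : ℝ) - 1) / N *
        (sqnorm (fun k => (X j k : ℝ) - mean X k)
          - sqnorm (fun k => (Function.update X i x' j k : ℝ)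
              - mean (Function.update X i x') k))
    = sqnorm (fun k => (X i k : ℝ) - mean X k)
        - sqnorm (fun k => (x' k : ℝ) - mean (Function.update X i x') k) := by
  have hupd : ∀ (j : Fin N) (k : Fin d), ((Function.update X i x' j k : ℤ) : ℝ)
      = Function.update (fun j => ((X j k : ℤ) : ℝ)) i ((x' k : ℝ)) j := by
    intro j k
    rcases eq_or_ne j i with h | h <;> simp [h, Function.update_apply]
  simp only [sqnorm, mean, ← Finset.sum_sub_distrib, Finset.mul_sum, hupd]
  rw [Finset.sum_comm]
  refine Finset.sum_congr rfl fun k _ => ?_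
  exact scalar_key hN (fun j => ((X j k : ℤ) : ℝ)) i ((x' k : ℝ))
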